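/- Let F₁, …, F₅ be bijections of 𝔽₂¹²⁸ such that each Fᵢ has algebraic degree at most 3 and each inverse Fᵢ⁻¹ has algebraic degree at most 3, and set E = F₅ ∘ ⋯ ∘ F₁. Then E has algebraic degree at most 112, and for every set I of 113 coordinates and every c : Fin 128 → ZMod 2, the sum over all x in the coordinate-affine set V(I,c) of the vector E(x) equals the zero vector of 𝔽₂¹²⁸. -/

import Mathlib

/-- A Boolean function `f : 𝔽₂ⁿ → 𝔽₂` has algebraic degree at most `d`. -/
def HasAlgDegLE {n : ℕ} (f : (Fin n → ZMod 2) → ZMod 2) (d : ℕ) : Prop :=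
  ∃ P : MvPolynomial (Fin n) (ZMod 2),
    P.totalDegree ≤ d ∧ ∀ x, MvPolynomial.eval x P = f x

/-- A vectorial function `F : 𝔽₂ⁿ → 𝔽₂ᵐ` has algebraic degree at most `d`. -/
def VecHasAlgDegLE {n m : ℕ} (F : (Fin n → ZMod 2) → (Fin m → ZMod 2)) (d : ℕ) : Prop :=
  ∀ j : Fin m, HasAlgDegLE (fun x => F x j) d

open Finset MvPolynomial

namespace GleeokAux

variable {n : ℕ}

lemma zmod2_cases (a : ZMod 2) : a = 0 ∨ a = 1 := by revert a; decide

lemma zmod2_sum_pow (k : ℕ) : ∑ b : ZMod 2, b ^ k = if k = 0 then 0 else 1 := by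
  cases k with
  | zero => decide
  | succ k =>
    have : (Finset.univ : Finset (ZMod 2)) = {0, 1} := by decide
    rw [this]
    simp [zero_pow, one_pow]

/-- Sum of a low-degree polynomial over all of 𝔽₂ⁿ vanishes. -/
lemma sum_eval_eq_zero (P : MvPolynomial (Fin n) (ZMod 2)) (h : P.totalDegree < n) :
    ∑ x : Fin n → ZMod 2, MvPolynomial.eval x P = 0 := by
  simp only [MvPolynomial.eval_eq']
  rw [Finset.sum_comm]
  refine Finset.sum_eq_zero fun s hs => ?_
  have hns : ∃ i, s i = 0 := by
    by_contra hc
    push_neg at hc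
    have h1 : ∀ i, 1 ≤ s i := fun i => Nat.one_le_iff_ne_zero.mpr (hc i)
    have : n ≤ ∑ i : Fin n, s i := by
      calc n = ∑ _i : Fin n, 1 := by simp
        _ ≤ ∑ i : Fin n, s i := Finset.sum_le_sum fun i _ => h1 i
    have hle : ∑ i : Fin n, s i ≤ P.totalDegree := by
      have := MvPolynomial.le_totalDegree hs
      rwa [Finsupp.sum_fintype] at this
      intro; rfl
    omega
  rw [← Finset.mul_sum]
  have : ∑ x : Fin n → ZMod 2, ∏ i : Fin n, x i ^ s i = ∏ i : Fin n, ∑ b : ZMod 2, b ^ s i :=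
    Fintype.prod_sum (fun i b => b ^ s i) |>.symm
  rw [this]
  obtain ⟨i, hi⟩ := hns
  have : ∏ i : Fin n, ∑ b : ZMod 2, b ^ s i = 0 := by
    apply Finset.prod_eq_zero (Finset.mem_univ i)
    rw [zmod2_sum_pow, if_pos hi]
  rw [this, mul_zero]


section Deg


lemma deg_const (c : ZMod 2) (d : ℕ) : HasAlgDegLE (fun _ : Fin n → ZMod 2 => c) d :=
  ⟨MvPolynomial.C c, by simp, by simp⟩

lemma deg_mono {f : (Fin n → ZMod 2) → ZMod 2} {d d' : ℕ} (h : d ≤ d')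
    (hf : HasAlgDegLE f d) : HasAlgDegLE f d' :=
  let ⟨P, hP, hPe⟩ := hf; ⟨P, hP.trans h, hPe⟩

lemma deg_add {f g : (Fin n → ZMod 2) → ZMod 2} {d : ℕ}
    (hf : HasAlgDegLE f d) (hg : HasAlgDegLE g d) :
    HasAlgDegLE (fun x => f x + g x) d := by
  obtain ⟨P, hP, hPe⟩ := hf
  obtain ⟨Q, hQ, hQe⟩ := hg
  exact ⟨P + Q, (MvPolynomial.totalDegree_add P Q).trans (max_le hP hQ),
    fun x => by simp [hPe x, hQe x]⟩

lemma deg_mul {f g : (Fin n → ZMod 2) → ZMod 2} {d e : ℕ}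
    (hf : HasAlgDegLE f d) (hg : HasAlgDegLE g e) :
    HasAlgDegLE (fun x => f x * g x) (d + e) := by
  obtain ⟨P, hP, hPe⟩ := hf
  obtain ⟨Q, hQ, hQe⟩ := hg
  exact ⟨P * Q, (MvPolynomial.totalDegree_mul P Q).trans (add_le_add hP hQ),
    fun x => by simp [hPe x, hQe x]⟩

lemma deg_pow {f : (Fin n → ZMod 2) → ZMod 2} {d : ℕ} (k : ℕ)
    (hf : HasAlgDegLE f d) : HasAlgDegLE (fun x => f x ^ k) (k * d) := by
  obtain ⟨P, hP, hPe⟩ := hf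
  exact ⟨P ^ k, (MvPolynomial.totalDegree_pow P k).trans (Nat.mul_le_mul_left k hP),
    fun x => by simp [hPe x]⟩

lemma deg_sum {ι : Type*} (s : Finset ι) (f : ι → (Fin n → ZMod 2) → ZMod 2) (d : ℕ)
    (h : ∀ i ∈ s, HasAlgDegLE (f i) d) :
    HasAlgDegLE (fun x => ∑ i ∈ s, f i x) d := by
  classical
  induction s using Finset.induction_on with
  | empty => simpa using deg_const 0 d
  | insert _ _ hni ih =>
    rename_i a s
    simp only [Finset.sum_insert hni]
    exact deg_add (h a (Finset.mem_insert_self a s))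
      (ih fun i hi => h i (Finset.mem_insert_of_mem hi))

lemma deg_prod {ι : Type*} (s : Finset ι) (f : ι → (Fin n → ZMod 2) → ZMod 2) (d : ι → ℕ)
    (h : ∀ i ∈ s, HasAlgDegLE (f i) (d i)) :
    HasAlgDegLE (fun x => ∏ i ∈ s, f i x) (∑ i ∈ s, d i) := by
  classical
  induction s using Finset.induction_on with
  | empty => simpa using deg_const 1 0
  | insert _ _ hni ih =>
    rename_i a s
    simp only [Finset.prod_insert hni, Finset.sum_insert hni]
    exact deg_mul (h a (Finset.mem_insert_self a s))
      (ih fun i hi => h i (Finset.mem_insert_of_mem hi))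

lemma deg_comp {m d e : ℕ} {Gf : (Fin n → ZMod 2) → (Fin m → ZMod 2)}
    (hG : ∀ j : Fin m, HasAlgDegLE (fun x => Gf x j) e)
    {f : (Fin m → ZMod 2) → ZMod 2} (hf : HasAlgDegLE f d) :
    HasAlgDegLE (fun x => f (Gf x)) (d * e) := by
  obtain ⟨P, hP, hPe⟩ := hf
  have key : ∀ x, f (Gf x) = ∑ s ∈ P.support, P.coeff s * ∏ i : Fin m, Gf x i ^ s i := by
    intro x
    rw [← hPe (Gf x), MvPolynomial.eval_eq']
  have : HasAlgDegLE
      (fun x => ∑ s ∈ P.support, P.coeff s * ∏ i : Fin m, Gf x i ^ s i) (d * e) := by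
    apply deg_sum
    intro s hs
    have hsum : ∑ i : Fin m, s i ≤ d := by
      have := MvPolynomial.le_totalDegree hs
      rw [Finsupp.sum_fintype] at this
      · exact this.trans hP
      · intro; rfl
    have hterm : HasAlgDegLE (fun x => ∏ i : Fin m, Gf x i ^ s i)
        (∑ i : Fin m, s i * e) :=
      deg_prod Finset.univ _ _ (fun i _ => deg_pow (s i) (hG i))
    have : HasAlgDegLE (fun x => ∏ i : Fin m, Gf x i ^ s i) (d * e) := by
      refine deg_mono ?_ hterm
      rw [← Finset.sum_mul]
      exact Nat.mul_le_mul_right e hsum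
    simpa using deg_mul (deg_const (P.coeff s) 0) this
  obtain ⟨Q, hQ, hQe⟩ := this
  exact ⟨Q, hQ, fun x => by simp only [hQe x, ← key x]⟩

end Deg


section Indicator

/-- Sum over an affine coordinate cube as a sum over everything against an indicator. -/
lemma sum_filter_eq_indicator (h : (Fin n → ZMod 2) → ZMod 2) (I : Finset (Fin n))
    (c : Fin n → ZMod 2) :
    ∑ x ∈ Finset.univ.filter (fun x : Fin n → ZMod 2 => ∀ i ∉ I, x i = c i), h x
      = ∑ x : Fin n → ZMod 2, h x * ∏ i ∈ Iᶜ, (1 + x i + c i) := by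
  rw [Finset.sum_filter]
  apply Finset.sum_congr rfl
  intro x _
  by_cases hx : ∀ i ∉ I, x i = c i
  · rw [if_pos hx]
    have : ∏ i ∈ Iᶜ, (1 + x i + c i) = 1 := by
      apply Finset.prod_eq_one
      intro i hi
      rw [hx i (Finset.mem_compl.mp hi)]
      rcases zmod2_cases (c i) with h0 | h0 <;> rw [h0] <;> decide
    rw [this, mul_one]
  · rw [if_neg hx]
    push_neg at hx
    obtain ⟨i, hiI, hine⟩ := hx
    have : ∏ i ∈ Iᶜ, (1 + x i + c i) = 0 := by
      apply Finset.prod_eq_zero (Finset.mem_compl.mpr hiI)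
      rcases zmod2_cases (x i) with h0 | h0 <;> rcases zmod2_cases (c i) with h1 | h1 <;>
        simp_all <;> decide
    rw [this, mul_zero]

/-- ANF coefficient of a Boolean function. -/
def coefANF (f : (Fin n → ZMod 2) → ZMod 2) (u : Finset (Fin n)) : ZMod 2 :=
  ∑ x ∈ Finset.univ.filter (fun x : Fin n → ZMod 2 => ∀ i ∉ u, x i = 0), f x

/-- Möbius inversion for the ANF over 𝔽₂. -/
lemma coefANF_inversion (f : (Fin n → ZMod 2) → ZMod 2) (x : Fin n → ZMod 2) :
    ∑ u : Finset (Fin n), coefANF f u * ∏ i ∈ u, x i = f x := by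
  classical
  set S : Finset (Fin n) := Finset.univ.filter (fun i => x i = 1) with hS
  have hmemS : ∀ i, i ∈ S ↔ x i = 1 := by intro i; simp [hS]
  -- the monomial evaluates to the indicator of u ⊆ S
  have hmono : ∀ u : Finset (Fin n), ∏ i ∈ u, x i = if u ⊆ S then 1 else 0 := by
    intro u
    by_cases hu : u ⊆ S
    · rw [if_pos hu]
      exact Finset.prod_eq_one fun i hi => (hmemS i).mp (hu hi)
    · rw [if_neg hu]
      obtain ⟨i, hiu, hiS⟩ := Finset.not_subset.mp hu
      apply Finset.prod_eq_zero hiu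
      rcases zmod2_cases (x i) with h0 | h0
      · exact h0
      · exact absurd ((hmemS i).mpr h0) hiS
  -- rewrite coefANF as a sum over univ against a subset condition
  have hcoef : ∀ u : Finset (Fin n), coefANF f u
      = ∑ z : Fin n → ZMod 2,
          if (Finset.univ.filter (fun i => z i = 1)) ⊆ u then f z else 0 := by
    intro u
    rw [coefANF, Finset.sum_filter]
    apply Finset.sum_congr rfl
    intro z _
    congr 1
    simp only [eq_iff_iff]
    constructor
    · intro hz i hi
      by_contra hiu
      have := hz i hiu
      rw [Finset.mem_filter] at hi
      rw [hi.2] at this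
      exact one_ne_zero this
    · intro hsub i hiu
      rcases zmod2_cases (z i) with h0 | h0
      · exact h0
      · exact absurd (hsub (Finset.mem_filter.mpr ⟨Finset.mem_univ i, h0⟩)) hiu
  calc ∑ u : Finset (Fin n), coefANF f u * ∏ i ∈ u, x i
      = ∑ u : Finset (Fin n), ∑ z : Fin n → ZMod 2,
          if (Finset.univ.filter (fun i => z i = 1)) ⊆ u ∧ u ⊆ S then f z else 0 := by
        apply Finset.sum_congr rfl
        intro u _
        rw [hmono u, hcoef u]
        by_cases hu : u ⊆ S
        · simp [hu]
        · simp [hu]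
    _ = ∑ z : Fin n → ZMod 2, ∑ u : Finset (Fin n),
          if (Finset.univ.filter (fun i => z i = 1)) ⊆ u ∧ u ⊆ S then f z else 0 :=
        Finset.sum_comm
    _ = f x := by
        rw [Finset.sum_eq_single x]
        · have hSx : Finset.univ.filter (fun i => x i = 1) = S := rfl
          rw [← Finset.sum_filter]
          have : Finset.univ.filter
              (fun u : Finset (Fin n) => Finset.univ.filter (fun i => x i = 1) ⊆ u ∧ u ⊆ S)
              = {S} := by
            ext u
            simp only [Finset.mem_filter, Finset.mem_univ, true_and, Finset.mem_singleton, hSx]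
            constructor
            · rintro ⟨h1, h2⟩; exact Finset.Subset.antisymm h2 h1
            · rintro rfl; exact ⟨Finset.Subset.refl S, Finset.Subset.refl S⟩
          rw [this, Finset.sum_singleton]
        · intro z _ hzx
          rw [← Finset.sum_filter]
          set T : Finset (Fin n) := Finset.univ.filter (fun i => z i = 1) with hT
          have hfilter : Finset.univ.filter
              (fun u : Finset (Fin n) => T ⊆ u ∧ u ⊆ S) = Finset.Icc T S := by
            ext u; simp [Finset.mem_Icc, Finset.le_iff_subset]
          rw [hfilter, Finset.sum_const]
          by_cases hTS : T ⊆ S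
          · have hTneS : T ≠ S := by
              intro hEq
              apply hzx
              funext i
              have hi : z i = 1 ↔ x i = 1 := by
                rw [← hmemS i, ← hEq, hT]
                simp
              rcases zmod2_cases (z i) with h0 | h0 <;> rcases zmod2_cases (x i) with h1 | h1 <;>
                simp_all
            rw [Finset.card_Icc_finset hTS]
            have hpos : 0 < S.card - T.card := by
              have hlt : T.card < S.card := Finset.card_lt_card (lt_of_le_of_ne hTS hTneS)
              omega
            have h2 : (((2 : ℕ) ^ (S.card - T.card) : ℕ) : ZMod 2) = 0 := by
              rw [Nat.cast_pow]
              have h3 : ((2 : ℕ) : ZMod 2) = 0 := by decide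
              rw [h3, zero_pow (by omega)]
            rw [nsmul_eq_mul, h2, zero_mul]
          · rw [Finset.Icc_eq_empty (by simpa [Finset.le_iff_subset] using hTS)]
            simp
        · intro hx; exact absurd (Finset.mem_univ x) hx

end Indicator

end GleeokAux

open GleeokAux

namespace GleeokAux

variable {n : ℕ}

lemma sum_univ_eq_zero {f : (Fin n → ZMod 2) → ZMod 2} {d : ℕ}
    (hf : HasAlgDegLE f d) (h : d < n) : ∑ x : Fin n → ZMod 2, f x = 0 := by
  obtain ⟨P, hP, hPe⟩ := hf
  rw [← Finset.sum_congr rfl fun x _ => hPe x]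
  exact sum_eval_eq_zero P (lt_of_le_of_lt hP h)

lemma deg_affine (i : Fin n) (c : ZMod 2) :
    HasAlgDegLE (fun x : Fin n → ZMod 2 => 1 + x i + c) 1 := by
  refine ⟨1 + MvPolynomial.X i + MvPolynomial.C c, ?_, fun x => by simp⟩
  refine (MvPolynomial.totalDegree_add _ _).trans (max_le ?_ (by simp))
  refine (MvPolynomial.totalDegree_add _ _).trans (max_le (by simp) ?_)
  rw [MvPolynomial.totalDegree_X]

end GleeokAux

/-- The improved 5-round integral distinguisher for Branch3 of Gleeok-128 with data
complexity `2^113`: five bijective rounds of degree at most 3, with inverses of degree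
at most 3, compose to degree at most `112 < 113`, so over any coordinate-affine set
with 113 active bits all output bits are balanced. -/
theorem five_round_branch3_integral_distinguisher
    (F G : Fin 5 → ((Fin 128 → ZMod 2) → (Fin 128 → ZMod 2)))
    (hbij : ∀ i, Function.Bijective (F i))
    (hleft : ∀ i, Function.LeftInverse (G i) (F i))
    (hright : ∀ i, Function.RightInverse (G i) (F i))
    (hF : ∀ i, VecHasAlgDegLE (F i) 3)
    (hG : ∀ i, VecHasAlgDegLE (G i) 3) :
    VecHasAlgDegLE (F 4 ∘ F 3 ∘ F 2 ∘ F 1 ∘ F 0) 112 ∧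
    ∀ (I : Finset (Fin 128)), I.card = 113 → ∀ c : Fin 128 → ZMod 2,
      ∑ x ∈ Finset.univ.filter (fun x : Fin 128 → ZMod 2 => ∀ i ∉ I, x i = c i),
        (F 4 ∘ F 3 ∘ F 2 ∘ F 1 ∘ F 0) x = 0 := by
  classical
  -- the composition of the last four rounds has degree at most 81
  have hQ : ∀ j : Fin 128,
      HasAlgDegLE (fun x => (F 4 (F 3 (F 2 (F 1 x)))) j) 81 := by
    intro j
    have h2 : ∀ j : Fin 128, HasAlgDegLE (fun x => (F 2 (F 1 x)) j) 9 := fun j =>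
      deg_mono (by norm_num) (deg_comp (hF 1) (hF 2 j))
    have h3 : ∀ j : Fin 128, HasAlgDegLE (fun x => (F 3 (F 2 (F 1 x))) j) 27 := fun j =>
      deg_mono (by norm_num) (deg_comp h2 (hF 3 j))
    exact deg_mono (by norm_num) (deg_comp h3 (hF 4 j))
  -- G 0 is bijective
  have hG0bij : Function.Bijective (G 0) :=
    Function.bijective_iff_has_inverse.mpr ⟨F 0, hright 0, hleft 0⟩
  -- vanishing of all high-degree ANF coefficients of the 5-round composition
  have hvan : ∀ (j : Fin 128) (u : Finset (Fin 128)), 113 ≤ u.card →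
      coefANF (fun x => (F 4 ∘ F 3 ∘ F 2 ∘ F 1 ∘ F 0) x j) u = 0 := by
    intro j u hu
    have hstep : coefANF (fun x => (F 4 ∘ F 3 ∘ F 2 ∘ F 1 ∘ F 0) x j) u
        = ∑ x : Fin 128 → ZMod 2,
            (F 4 ∘ F 3 ∘ F 2 ∘ F 1 ∘ F 0) x j * ∏ i ∈ uᶜ, (1 + x i + (0 : ZMod 2)) := by
      have h := sum_filter_eq_indicator
        (fun x => (F 4 ∘ F 3 ∘ F 2 ∘ F 1 ∘ F 0) x j) u (fun _ => (0 : ZMod 2))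
      rw [coefANF]
      convert h using 2
    rw [hstep]
    -- reindex by the bijection G 0
    have hreindex : ∑ x : Fin 128 → ZMod 2,
          (F 4 ∘ F 3 ∘ F 2 ∘ F 1 ∘ F 0) x j * ∏ i ∈ uᶜ, (1 + x i + (0 : ZMod 2))
        = ∑ y : Fin 128 → ZMod 2,
            (F 4 (F 3 (F 2 (F 1 y)))) j * ∏ i ∈ uᶜ, (1 + G 0 y i + (0 : ZMod 2)) := by
      refine (Fintype.sum_bijective (G 0) hG0bij _ _ fun y => ?_).symm
      simp only [Function.comp_apply, hright 0 y]
    rw [hreindex]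
    -- the summand has degree at most 126 < 128
    have hdeg : HasAlgDegLE (fun y : Fin 128 → ZMod 2 =>
        (F 4 (F 3 (F 2 (F 1 y)))) j * ∏ i ∈ uᶜ, (1 + G 0 y i + (0 : ZMod 2))) 126 := by
      have hprod : HasAlgDegLE
          (fun y : Fin 128 → ZMod 2 => ∏ i ∈ uᶜ, (1 + G 0 y i + (0 : ZMod 2)))
          (∑ _i ∈ uᶜ, 3) := by
        apply deg_prod
        intro i _
        have : HasAlgDegLE (fun y : Fin 128 → ZMod 2 => 1 + G 0 y i) 3 :=
          deg_add (deg_const 1 3) (hG 0 i)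
        simpa using this
      have hcc : uᶜ.card ≤ 15 := by
        have h1 : uᶜ.card = 128 - u.card := by
          rw [Finset.card_compl, Fintype.card_fin]
        omega
      have : (∑ _i ∈ uᶜ, 3) ≤ 45 := by
        rw [Finset.sum_const, smul_eq_mul]
        omega
      exact deg_mono (by omega) (deg_mul (hQ j) (deg_mono this hprod))
    exact sum_univ_eq_zero hdeg (by norm_num)
  -- part 1: degree at most 112
  have hpart1 : VecHasAlgDegLE (F 4 ∘ F 3 ∘ F 2 ∘ F 1 ∘ F 0) 112 := by
    intro j
    set a : Finset (Fin 128) → ZMod 2 :=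
      coefANF (fun x => (F 4 ∘ F 3 ∘ F 2 ∘ F 1 ∘ F 0) x j) with ha
    refine ⟨∑ u ∈ Finset.univ.filter (fun u : Finset (Fin 128) => u.card ≤ 112),
      MvPolynomial.C (a u) * ∏ i ∈ u, MvPolynomial.X i, ?_, ?_⟩
    · apply MvPolynomial.totalDegree_finsetSum_le
      intro u hu
      rw [Finset.mem_filter] at hu
      refine (MvPolynomial.totalDegree_mul _ _).trans ?_
      rw [MvPolynomial.totalDegree_C, zero_add]
      refine (MvPolynomial.totalDegree_finset_prod _ _).trans ?_
      calc ∑ i ∈ u, (MvPolynomial.X i : MvPolynomial (Fin 128) (ZMod 2)).totalDegree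
          = ∑ _i ∈ u, 1 := by
            apply Finset.sum_congr rfl
            intro i _
            rw [MvPolynomial.totalDegree_X]
        _ ≤ 112 := by rw [Finset.sum_const, smul_eq_mul, mul_one]; exact hu.2
    · intro x
      rw [map_sum]
      have heval : ∀ u ∈ Finset.univ.filter (fun u : Finset (Fin 128) => u.card ≤ 112),
          MvPolynomial.eval x (MvPolynomial.C (a u) * ∏ i ∈ u, MvPolynomial.X i)
            = a u * ∏ i ∈ u, x i := by
        intro u _
        rw [map_mul, MvPolynomial.eval_C, map_prod]
        simp
      rw [Finset.sum_congr rfl heval]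
      have hext : ∑ u ∈ Finset.univ.filter (fun u : Finset (Fin 128) => u.card ≤ 112),
          a u * ∏ i ∈ u, x i = ∑ u : Finset (Fin 128), a u * ∏ i ∈ u, x i := by
        rw [Finset.sum_filter]
        apply Finset.sum_congr rfl
        intro u _
        by_cases h : u.card ≤ 112
        · rw [if_pos h]
        · rw [if_neg h, ha, hvan j u (by omega), zero_mul]
      rw [hext, coefANF_inversion]
  refine ⟨hpart1, ?_⟩
  -- part 2: the integral property
  intro I hI c
  funext j
  rw [Finset.sum_apply, Pi.zero_apply]
  rw [sum_filter_eq_indicator (fun x => (F 4 ∘ F 3 ∘ F 2 ∘ F 1 ∘ F 0) x j) I c]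
  have hdeg : HasAlgDegLE (fun x : Fin 128 → ZMod 2 =>
      (F 4 ∘ F 3 ∘ F 2 ∘ F 1 ∘ F 0) x j * ∏ i ∈ Iᶜ, (1 + x i + c i)) 127 := by
    have hprod : HasAlgDegLE
        (fun x : Fin 128 → ZMod 2 => ∏ i ∈ Iᶜ, (1 + x i + c i)) (∑ _i ∈ Iᶜ, 1) :=
      deg_prod _ _ _ (fun i _ => deg_affine i (c i))
    have hcc : Iᶜ.card = 15 := by
      rw [Finset.card_compl, Fintype.card_fin, hI]
    have h15 : (∑ _i ∈ Iᶜ, 1) ≤ 15 := by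
      rw [Finset.sum_const, smul_eq_mul, mul_one, hcc]
    exact deg_mono (by omega) (deg_mul (hpart1 j) (deg_mono h15 hprod))
  exact sum_univ_eq_zero hdeg (by norm_num)
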